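/- arXiv:1210.6060 — 2 statements merged into one kernel-verified Lean document; each statement's English description precedes it below -/
import Mathlib

section
/- Let ζ ∈ ℂ with a = Re ζ ≠ 0. The operator K_ζ on C([0,1],ℂ) defined by (K_ζ f)(x) = e^{ζx} ∫₀ˣ e^{−ζt} f(t) dt is bounded with operator norm exactly (e^a − 1)/a. -/
open Set intervalIntegral

noncomputable section

namespace Stmt8Aux

lemma cont_integrand (ζ : ℂ) (f : C(↥(Set.Icc (0:ℝ) 1), ℂ)) :
    Continuous fun t : ℝ => Complex.exp (-ζ * t) * f (Set.projIcc 0 1 zero_le_one t) :=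
  (Complex.continuous_exp.comp (by continuity)).mul
    (f.continuous.comp continuous_projIcc)

lemma real_exp_integral {a : ℝ} (ha : a ≠ 0) (x : ℝ) :
    ∫ t in (0:ℝ)..x, Real.exp (-a * t) = (1 - Real.exp (-a * x)) / a := by
  have h : ∀ t ∈ Set.uIcc (0:ℝ) x, HasDerivAt (fun t => -Real.exp (-a * t) / a)
      (Real.exp (-a * t)) t := by
    intro t _
    have h1 : HasDerivAt (fun t : ℝ => -a * t) (-a) t := by
      simpa using (hasDerivAt_id t).const_mul (-a)
    have h2 := (Real.hasDerivAt_exp (-a * t)).comp t h1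
    have h3 := (h2.neg).div_const a
    convert h3 using 1
    · rfl
    · rfl
    · rfl
    · field_simp
  rw [intervalIntegral.integral_eq_sub_of_hasDerivAt h
    ((Real.continuous_exp.comp (by continuity)).intervalIntegrable 0 x)]
  simp
  ring

lemma mono_bound {a : ℝ} (ha : a ≠ 0) {x : ℝ} (hx : 0 ≤ x) (hx1 : x ≤ 1) :
    0 ≤ (Real.exp (a * x) - 1) / a ∧
      (Real.exp (a * x) - 1) / a ≤ (Real.exp a - 1) / a := by
  rcases lt_or_gt_of_ne ha with h | h
  · have h1 : Real.exp (a * x) ≤ 1 := by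
      rw [show (1:ℝ) = Real.exp 0 by simp]
      exact Real.exp_le_exp.2 (by nlinarith)
    have h2 : Real.exp a ≤ Real.exp (a * x) := Real.exp_le_exp.2 (by nlinarith)
    exact ⟨div_nonneg_of_nonpos (by linarith) h.le,
      div_le_div_of_nonpos_of_le h.le (by linarith)⟩
  · have h1 : 1 ≤ Real.exp (a * x) := by
      rw [show (1:ℝ) = Real.exp 0 by simp]
      exact Real.exp_le_exp.2 (by nlinarith)
    have h2 : Real.exp (a * x) ≤ Real.exp a := Real.exp_le_exp.2 (by nlinarith)
    exact ⟨div_nonneg (by linarith) h.le, div_le_div_of_nonneg_right (by linarith) h.le⟩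

lemma Cpos {a : ℝ} (ha : a ≠ 0) : 0 < (Real.exp a - 1) / a := by
  rcases lt_or_gt_of_ne ha with h | h
  · have : Real.exp a < 1 := by
      rw [show (1:ℝ) = Real.exp 0 by simp]; exact Real.exp_lt_exp.2 h
    exact div_pos_of_neg_of_neg (by linarith) h
  · have : 1 < Real.exp a := by
      rw [show (1:ℝ) = Real.exp 0 by simp]; exact Real.exp_lt_exp.2 h
    exact div_pos (by linarith) h

/-- The operator as a continuous map constructor. -/
def Kfun (ζ : ℂ) (f : C(↥(Set.Icc (0:ℝ) 1), ℂ)) : C(↥(Set.Icc (0:ℝ) 1), ℂ) :=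
  ⟨fun x => Complex.exp (ζ * (x : ℝ)) *
      ∫ t in (0:ℝ)..(x : ℝ),
        Complex.exp (-ζ * t) * f (Set.projIcc 0 1 zero_le_one t), by
    have hF : Continuous fun x : ℝ => ∫ t in (0:ℝ)..x,
        Complex.exp (-ζ * t) * f (Set.projIcc 0 1 zero_le_one t) :=
      intervalIntegral.continuous_primitive
        (fun a b => (cont_integrand ζ f).intervalIntegrable a b) 0
    exact ((Complex.continuous_exp.comp (by continuity)).mul
      (hF.comp continuous_subtype_val))⟩

lemma Kfun_bound (ζ : ℂ) (ha : ζ.re ≠ 0) (f : C(↥(Set.Icc (0:ℝ) 1), ℂ)) :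
    ‖Kfun ζ f‖ ≤ (Real.exp ζ.re - 1) / ζ.re * ‖f‖ := by
  set a := ζ.re
  rw [ContinuousMap.norm_le_of_nonempty]
  intro x
  obtain ⟨hx0, hx1⟩ := x.2
  have hnorm_int : ‖∫ t in (0:ℝ)..(x : ℝ),
      Complex.exp (-ζ * t) * f (Set.projIcc 0 1 zero_le_one t)‖ ≤
      |∫ t in (0:ℝ)..(x : ℝ), Real.exp (-a * t) * ‖f‖| := by
    apply intervalIntegral.norm_integral_le_abs_of_norm_le
    · filter_upwards with t
      rw [norm_mul, Complex.norm_exp]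
      have : (-ζ * t).re = -a * t := by simp [Complex.mul_re, a]
      rw [this]
      exact mul_le_mul_of_nonneg_left (f.norm_coe_le_norm _) (Real.exp_nonneg _)
    · exact ((Real.continuous_exp.comp (by continuity)).mul continuous_const).intervalIntegrable 0 _
  have hint : ∫ t in (0:ℝ)..(x : ℝ), Real.exp (-a * t) * ‖f‖ =
      (1 - Real.exp (-a * x)) / a * ‖f‖ := by
    rw [intervalIntegral.integral_mul_const, real_exp_integral ha]
  have hnexp : ‖Complex.exp (ζ * (x : ℝ))‖ = Real.exp (a * x) := by
    rw [Complex.norm_exp]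
    congr 1
    simp [Complex.mul_re, a]
  calc ‖(Kfun ζ f) x‖ = ‖Complex.exp (ζ * (x : ℝ))‖ * ‖∫ t in (0:ℝ)..(x : ℝ),
        Complex.exp (-ζ * t) * f (Set.projIcc 0 1 zero_le_one t)‖ := by
        simp [Kfun, norm_mul]
    _ ≤ Real.exp (a * x) * (|(1 - Real.exp (-a * x)) / a| * ‖f‖) := by
        rw [hnexp]
        apply mul_le_mul_of_nonneg_left _ (Real.exp_nonneg _)
        calc _ ≤ |∫ t in (0:ℝ)..(x : ℝ), Real.exp (-a * t) * ‖f‖| := hnorm_int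
          _ = |(1 - Real.exp (-a * x)) / a| * ‖f‖ := by
              rw [hint, abs_mul, abs_of_nonneg (norm_nonneg f)]
    _ = |(Real.exp (a * x) - 1) / a| * ‖f‖ := by
        rw [← mul_assoc]
        congr 1
        rw [← abs_of_nonneg (Real.exp_nonneg (a * x)), ← abs_mul]
        congr 1
        rw [abs_of_nonneg (Real.exp_nonneg _)]
        field_simp
        rw [mul_sub, ← Real.exp_add]
        simp
    _ ≤ (Real.exp a - 1) / a * ‖f‖ := by
        apply mul_le_mul_of_nonneg_right _ (norm_nonneg f)
        rw [abs_of_nonneg (mono_bound ha hx0 hx1).1]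
        exact (mono_bound ha hx0 hx1).2

end Stmt8Aux

namespace Stmt8Aux

def Klin (ζ : ℂ) : C(↥(Set.Icc (0:ℝ) 1), ℂ) →ₗ[ℂ] C(↥(Set.Icc (0:ℝ) 1), ℂ) where
  toFun := Kfun ζ
  map_add' f g := by
    ext x
    simp only [Kfun, ContinuousMap.coe_mk, ContinuousMap.add_apply]
    rw [← mul_add, ← intervalIntegral.integral_add
      ((cont_integrand ζ f).intervalIntegrable _ _)
      ((cont_integrand ζ g).intervalIntegrable _ _)]
    congr 1
    apply intervalIntegral.integral_congr
    intro t _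
    simp [mul_add]
  map_smul' c f := by
    ext x
    simp only [Kfun, ContinuousMap.coe_mk, ContinuousMap.smul_apply, RingHom.id_apply,
      smul_eq_mul]
    have hc : ∀ t : ℝ, Complex.exp (-ζ * t) * (c * f (Set.projIcc 0 1 zero_le_one t)) =
        c * (Complex.exp (-ζ * t) * f (Set.projIcc 0 1 zero_le_one t)) := fun t => by ring
    simp_rw [hc, intervalIntegral.integral_const_mul]
    ring

def Kop (ζ : ℂ) (ha : ζ.re ≠ 0) :
    C(↥(Set.Icc (0:ℝ) 1), ℂ) →L[ℂ] C(↥(Set.Icc (0:ℝ) 1), ℂ) :=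
  LinearMap.mkContinuous (Klin ζ) ((Real.exp ζ.re - 1) / ζ.re) (Kfun_bound ζ ha)

end Stmt8Aux

open Stmt8Aux

/-- For `ζ ∈ ℂ` with `a = Re ζ ≠ 0`, the operator
`(K_ζ f)(x) = e^{ζx} ∫₀ˣ e^{-ζt} f(t) dt` on `C([0,1],ℂ)` is bounded with
operator norm exactly `(e^a - 1)/a`. -/
theorem stmt_8 (ζ : ℂ) (ha : ζ.re ≠ 0) :
    ∃ K : C(↥(Set.Icc (0:ℝ) 1), ℂ) →L[ℂ] C(↥(Set.Icc (0:ℝ) 1), ℂ),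
      (∀ (f : C(↥(Set.Icc (0:ℝ) 1), ℂ)) (x : ↥(Set.Icc (0:ℝ) 1)),
        K f x = Complex.exp (ζ * (x : ℝ)) *
          ∫ t in (0:ℝ)..(x : ℝ),
            Complex.exp (-ζ * t) * f (Set.projIcc 0 1 zero_le_one t)) ∧
      ‖K‖ = (Real.exp ζ.re - 1) / ζ.re := by
  set a := ζ.re with ha'
  refine ⟨Kop ζ ha, fun f x => rfl, le_antisymm
    (LinearMap.mkContinuous_norm_le _ (Cpos ha).le _) ?_⟩
  -- lower bound: test function f₀ t = exp((ζ - a) t)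
  set f₀ : C(↥(Set.Icc (0:ℝ) 1), ℂ) :=
    ⟨fun x => Complex.exp ((ζ - a) * (x : ℝ)), by
      exact Complex.continuous_exp.comp (by continuity)⟩ with hf₀
  have hre : ∀ x : ℝ, ((ζ - (a:ℂ)) * (x:ℝ)).re = 0 := by
    intro x
    simp [Complex.mul_re, Complex.sub_re, ha']
  have hf₀norm : ‖f₀‖ = 1 := by
    apply le_antisymm
    · rw [ContinuousMap.norm_le_of_nonempty]
      intro x
      rw [hf₀]
      simp only [ContinuousMap.coe_mk]
      rw [Complex.norm_exp, hre, Real.exp_zero]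
    · have := (Kop ζ ha).le_opNorm f₀  -- dummy
      have h1 : ‖f₀ ⟨0, by norm_num⟩‖ ≤ ‖f₀‖ := f₀.norm_coe_le_norm _
      rw [hf₀] at h1
      simpa using h1
  have hone : (1:ℝ) ∈ Set.Icc (0:ℝ) 1 := by norm_num
  -- compute K f₀ at 1
  have hint : (∫ t in (0:ℝ)..(1:ℝ),
      Complex.exp (-ζ * t) * f₀ (Set.projIcc 0 1 zero_le_one t)) =
      (Complex.exp (-(a:ℂ)) - 1) / (-(a:ℂ)) := by
    have hc : (-(a:ℂ)) ≠ 0 := by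
      simp only [ne_eq, neg_eq_zero]
      exact_mod_cast ha
    rw [show (∫ t in (0:ℝ)..(1:ℝ),
        Complex.exp (-ζ * t) * f₀ (Set.projIcc 0 1 zero_le_one t)) =
        ∫ t in (0:ℝ)..(1:ℝ), Complex.exp (-(a:ℂ) * t) by
      apply intervalIntegral.integral_congr
      intro t ht
      rw [Set.uIcc_of_le (by norm_num : (0:ℝ) ≤ 1)] at ht
      simp only [hf₀, ContinuousMap.coe_mk]
      rw [Set.projIcc_of_mem zero_le_one ht, ← Complex.exp_add]
      push_cast
      congr 1
      ring]
    rw [integral_exp_mul_complex hc]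
    simp
  have hval : ‖(Kop ζ ha) f₀ ⟨1, hone⟩‖ = (Real.exp a - 1) / a := by
    show ‖Complex.exp (ζ * ((1:ℝ):ℂ)) * _‖ = _
    rw [hint, norm_mul, Complex.norm_exp]
    have h1 : (ζ * ((1:ℝ):ℂ)).re = a := by simp [ha']
    rw [h1]
    have h2 : (Complex.exp (-(a:ℂ)) - 1) / (-(a:ℂ)) =
        (((Real.exp (-a) - 1) / (-a) : ℝ) : ℂ) := by
      push_cast [← Complex.ofReal_exp]
      norm_num
    rw [h2, Complex.norm_real, Real.norm_eq_abs,
      abs_of_pos (Cpos (neg_ne_zero.2 ha))]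
    rw [div_neg, Real.exp_neg]
    field_simp
    ring
  have h1 : (Real.exp a - 1) / a ≤ ‖(Kop ζ ha) f₀‖ := by
    rw [← hval]
    exact ((Kop ζ ha) f₀).norm_coe_le_norm _
  calc (Real.exp a - 1) / a ≤ ‖(Kop ζ ha) f₀‖ := h1
    _ ≤ ‖Kop ζ ha‖ * ‖f₀‖ := (Kop ζ ha).le_opNorm f₀
    _ = ‖Kop ζ ha‖ := by rw [hf₀norm, mul_one]
end
end

section
/- With E = {f ∈ C([0,1],ℂ) : f(0)=0}, F = {u ∈ C¹ : u(0)=u′(0)=0}, T = derivation, and R(ζ) = (ζι − T)^{-1} : E → F. For real ζ > 0: (e^ζ − 1 − ζ)/ζ² ≤ ‖R(ζ)‖ ≤ (e^ζ − 1)/ζ; in particular ‖R(ζ)‖ → ∞ as ζ → +∞. -/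
open Set intervalIntegral --pre

lemma real_exp_integral (ζ : ℝ) (hζ : ζ ≠ 0) (x : ℝ) :
    ∫ t in (0:ℝ)..x, Real.exp (-ζ * t) = (1 - Real.exp (-ζ * x)) / ζ := by
  have D : ∀ t : ℝ, HasDerivAt (fun s : ℝ => -Real.exp (-ζ * s) / ζ) (Real.exp (-ζ * t)) t := by
    intro t
    have h1 : HasDerivAt (fun s : ℝ => -ζ * s) (-ζ) t := by
      simpa using (hasDerivAt_id t).const_mul (-ζ)
    have := (h1.exp.neg).div_const ζ
    convert this using 1
    all_goals try rfl
    field_simp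
  rw [intervalIntegral.integral_eq_sub_of_hasDerivAt (fun t _ => D t)
    (by apply Continuous.intervalIntegrable; fun_prop)]
  simp
  ring

lemma cexp_hasDerivAt (c : ℂ) (t : ℝ) :
    HasDerivAt (fun s : ℝ => Complex.exp (c * s)) (c * Complex.exp (c * t)) t := by
  have h : HasDerivAt (fun z : ℂ => Complex.exp (c * z)) (c * Complex.exp (c * t)) (t : ℂ) := by
    simpa [mul_comm] using ((hasDerivAt_id (t : ℂ)).const_mul c).cexp
  exact h.comp_ofReal

lemma texp_integral (ζ : ℂ) (hζ : ζ ≠ 0) (x : ℝ) :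
    ∫ t in (0:ℝ)..x, Complex.exp (-ζ * t) * t
      = (1 - Complex.exp (-ζ * x) * (ζ * x + 1)) / ζ ^ 2 := by
  have D : ∀ t : ℝ, HasDerivAt
      (fun s : ℝ => -(Complex.exp (-ζ * s) * (ζ * s + 1)) / ζ ^ 2)
      (Complex.exp (-ζ * t) * t) t := by
    intro t
    have h1 := cexp_hasDerivAt (-ζ) t
    have h2 : HasDerivAt (fun s : ℝ => (ζ * s + 1 : ℂ)) ζ t := by
      have := ((Complex.ofRealCLM.hasDerivAt (x := t)).const_mul ζ).add_const (1 : ℂ)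
      simpa using this
    have h3 := ((h1.mul h2).neg).div_const (ζ ^ 2)
    convert h3 using 1
    all_goals try rfl
    field_simp
    ring
  rw [intervalIntegral.integral_eq_sub_of_hasDerivAt (fun t _ => D t)
    (by apply Continuous.intervalIntegrable; fun_prop)]
  simp
  ring



open Set intervalIntegral

/-- The point `0` of `[0,1]`. -/
def pt0 : ↥(Set.Icc (0:ℝ) 1) := ⟨0, Set.left_mem_Icc.mpr zero_le_one⟩

/-- With `E = {f ∈ C([0,1],ℂ) : f(0)=0}` and `R(ζ)f = -K_ζ f` the resolvent of
the derivation operator, for real `ζ > 0`: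
`(e^ζ - 1 - ζ)/ζ² ≤ ‖R(ζ)‖ ≤ (e^ζ - 1)/ζ`. Upper bound: `‖R(ζ)f‖ ≤ ((e^ζ-1)/ζ)‖f‖`
for every `f ∈ E`; lower bound: some `f ∈ E` with `‖f‖ ≤ 1` has
`‖R(ζ)f‖ ≥ (e^ζ - 1 - ζ)/ζ²`. In particular `‖R(ζ)‖ → ∞` as `ζ → ∞`. -/
theorem stmt_15 (ζ : ℝ) (hζ : 0 < ζ) :
    (∀ f g : C(↥(Set.Icc (0:ℝ) 1), ℂ), f pt0 = 0 →
      (∀ x : ↥(Set.Icc (0:ℝ) 1),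
        g x = -(Complex.exp ((ζ : ℂ) * (x : ℝ)) *
          ∫ t in (0:ℝ)..(x : ℝ),
            Complex.exp (-(ζ : ℂ) * t) * f (Set.projIcc 0 1 zero_le_one t))) →
      ‖g‖ ≤ (Real.exp ζ - 1) / ζ * ‖f‖) ∧
    (∃ f g : C(↥(Set.Icc (0:ℝ) 1), ℂ), f pt0 = 0 ∧ ‖f‖ ≤ 1 ∧
      (∀ x : ↥(Set.Icc (0:ℝ) 1),
        g x = -(Complex.exp ((ζ : ℂ) * (x : ℝ)) *
          ∫ t in (0:ℝ)..(x : ℝ),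
            Complex.exp (-(ζ : ℂ) * t) * f (Set.projIcc 0 1 zero_le_one t))) ∧
      (Real.exp ζ - 1 - ζ) / ζ ^ 2 ≤ ‖g‖) := by
  constructor
  · intro f g hf0 hg
    have h1exp : ζ + 1 ≤ Real.exp ζ := Real.add_one_le_exp ζ
    have hC : 0 ≤ (Real.exp ζ - 1) / ζ := div_nonneg (by linarith) hζ.le
    apply (ContinuousMap.norm_le _ (mul_nonneg hC (norm_nonneg f))).mpr
    intro x
    have hx0 : (0:ℝ) ≤ x := x.2.1
    have hx1 : (x:ℝ) ≤ 1 := x.2.2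
    rw [hg x, norm_neg, norm_mul]
    have hne : ‖Complex.exp ((ζ:ℂ) * ((x:ℝ):ℂ))‖ = Real.exp (ζ * x) := by
      rw [Complex.norm_exp]
      norm_num
    have hint : ‖∫ t in (0:ℝ)..(x:ℝ), Complex.exp (-(ζ:ℂ)*t) * f (Set.projIcc 0 1 zero_le_one t)‖
        ≤ (1 - Real.exp (-ζ * x)) / ζ * ‖f‖ := by
      have hb : ∀ t : ℝ,
          ‖Complex.exp (-(ζ:ℂ)*t) * f (Set.projIcc 0 1 zero_le_one t)‖
            ≤ Real.exp (-ζ*t) * ‖f‖ := by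
        intro t
        rw [norm_mul]
        apply mul_le_mul _ (f.norm_coe_le_norm _) (norm_nonneg _) (Real.exp_nonneg _)
        rw [Complex.norm_exp]
        norm_num
      have hbint : IntervalIntegrable (fun t => Real.exp (-ζ*t) * ‖f‖)
          MeasureTheory.volume 0 (x:ℝ) := by
        apply Continuous.intervalIntegrable; fun_prop
      have key := intervalIntegral.norm_integral_le_abs_of_norm_le
        (Filter.Eventually.of_forall fun t => hb t) hbint
      refine key.trans ?_
      rw [intervalIntegral.integral_mul_const, real_exp_integral ζ hζ.ne' x]
      rw [abs_of_nonneg]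
      apply mul_nonneg _ (norm_nonneg f)
      apply div_nonneg _ hζ.le
      have : Real.exp (-ζ*x) ≤ 1 := Real.exp_le_one_iff.mpr (by nlinarith)
      linarith
    rw [hne]
    refine le_trans (mul_le_mul_of_nonneg_left hint (Real.exp_nonneg _)) ?_
    have he : Real.exp (ζ*x) * ((1 - Real.exp (-ζ*x))/ζ) = (Real.exp (ζ*x) - 1)/ζ := by
      rw [mul_div_assoc']
      congr 1
      rw [mul_sub, ← Real.exp_add, mul_one]
      norm_num
    have hle : Real.exp (ζ*x) ≤ Real.exp ζ := Real.exp_le_exp.mpr (by nlinarith)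
    rw [← mul_assoc, he]
    gcongr
  ·
    have hζc : ((ζ:ℂ)) ≠ 0 := by exact_mod_cast hζ.ne'
    refine ⟨⟨fun x => ((x : ℝ) : ℂ), by fun_prop⟩,
            ⟨fun x => -((Complex.exp ((ζ:ℂ) * ((x:ℝ):ℂ)) - 1 - (ζ:ℂ) * ((x:ℝ):ℂ)) / (ζ:ℂ)^2),
              by fun_prop⟩, ?_, ?_, ?_, ?_⟩
    · simp [pt0]
    · apply (ContinuousMap.norm_le _ zero_le_one).mpr
      intro x
      simp only [ContinuousMap.coe_mk, Complex.norm_real, Real.norm_eq_abs]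
      rw [abs_of_nonneg x.2.1]
      exact x.2.2
    · intro x
      have hx0 : (0:ℝ) ≤ x := x.2.1
      have hx1 : (x:ℝ) ≤ 1 := x.2.2
      have hcongr : (∫ t in (0:ℝ)..(x:ℝ), Complex.exp (-(ζ:ℂ)*t) *
            (((Set.projIcc 0 1 zero_le_one t : ↥(Set.Icc (0:ℝ) 1)) : ℝ) : ℂ))
          = ∫ t in (0:ℝ)..(x:ℝ), Complex.exp (-(ζ:ℂ)*t) * (t:ℂ) := by
        apply intervalIntegral.integral_congr
        intro t ht
        rw [Set.uIcc_of_le hx0] at ht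
        have hmem : t ∈ Set.Icc (0:ℝ) 1 := ⟨ht.1, ht.2.trans hx1⟩
        show Complex.exp (-(ζ:ℂ)*t) * _ = Complex.exp (-(ζ:ℂ)*t) * (t:ℂ)
        rw [Set.projIcc_of_mem _ hmem]
      simp only [ContinuousMap.coe_mk]
      rw [hcongr, texp_integral _ hζc x]
      have hexp : Complex.exp (-(ζ:ℂ) * ((x:ℝ):ℂ)) = (Complex.exp ((ζ:ℂ) * ((x:ℝ):ℂ)))⁻¹ := by
        rw [← Complex.exp_neg]
        ring_nf
      rw [hexp]
      field_simp
      ring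
    · have hx1 : ((1:ℝ)) ∈ Set.Icc (0:ℝ) 1 := Set.right_mem_Icc.mpr zero_le_one
      have h1exp : ζ + 1 ≤ Real.exp ζ := Real.add_one_le_exp ζ
      refine le_trans ?_ (ContinuousMap.norm_coe_le_norm _ ⟨1, hx1⟩)
      have hval : (⟨fun x => -((Complex.exp ((ζ:ℂ) * ((x:ℝ):ℂ)) - 1 - (ζ:ℂ) * ((x:ℝ):ℂ)) / (ζ:ℂ)^2),
            by fun_prop⟩ : C(↥(Set.Icc (0:ℝ) 1), ℂ)) ⟨1, hx1⟩
          = -((((Real.exp ζ - 1 - ζ) / ζ^2 : ℝ)) : ℂ) := by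
        simp only [ContinuousMap.coe_mk]
        push_cast [Complex.ofReal_exp]
        norm_num
      rw [hval, norm_neg, Complex.norm_real, Real.norm_eq_abs, abs_of_nonneg]
      apply div_nonneg _ (by positivity)
      linarith
end
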